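/- For a ∈ [0,∞), the Markov selection (P_x^a) of the Peano example has δ_1 as its unique invariant measure, while for a = ∞ (the absorbing selection) every convex combination of δ_0 and δ_1 is invariant. -/

import Mathlib

open MeasureTheory

/-- The flow of `Ẋ = -X + √X`: `X_x(t) = (1 + (√x - 1) e^{-t/2})²` (for `x ∈ (0,1]` this is
the unique solution; `X_0 = X⋆` is the strictly positive solution starting at `0`). -/
noncomputable def peanoFlow (x t : ℝ) : ℝ :=
  (1 + (Real.sqrt x - 1) * Real.exp (-t / 2)) ^ 2

/-- Transition operator of the Markov selection with an exponential waiting time of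
parameter `a ∈ [0,∞)` at `0` (mean waiting time `a`; `a = 0` is immediate departure):
away from `0` the dynamics is the deterministic flow. -/
noncomputable def peanoTrans (a t : ℝ) (f : ℝ → ℝ) (x : ℝ) : ℝ :=
  if x = 0 then
    (if a = 0 then f (peanoFlow 0 t)
      else ∫ s in Set.Ioi (0:ℝ),
        a⁻¹ * Real.exp (-s / a) * f (peanoFlow 0 (max (t - s) 0)))
  else f (peanoFlow x t)

/-- Transition operator of the absorbing selection (`a = ∞`): the solution stays at `0`
forever. -/
noncomputable def peanoTransInf (t : ℝ) (f : ℝ → ℝ) (x : ℝ) : ℝ :=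
  if x = 0 then f 0 else f (peanoFlow x t)

open Filter Topology

lemma peanoFlow_one (t : ℝ) : peanoFlow 1 t = 1 := by simp [peanoFlow]

lemma tendsto_peanoFlow (x : ℝ) : Tendsto (fun t => peanoFlow x t) atTop (𝓝 1) := by
  have h1 : Tendsto (fun t : ℝ => -t / 2) atTop atBot :=
    (tendsto_neg_atTop_atBot.comp tendsto_id).atBot_div_const two_pos
  have h2 : Tendsto (fun t : ℝ => (Real.sqrt x - 1) * Real.exp (-t / 2)) atTop (𝓝 0) := by
    simpa using (Real.tendsto_exp_atBot.comp h1).const_mul (Real.sqrt x - 1)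
  have h3 : Tendsto (fun t : ℝ => (1 + (Real.sqrt x - 1) * Real.exp (-t / 2)) ^ 2) atTop
      (𝓝 ((1 + 0) ^ 2)) := (tendsto_const_nhds.add h2).pow 2
  simpa [peanoFlow] using h3

lemma tendsto_peanoFlow_max (x s : ℝ) :
    Tendsto (fun t => peanoFlow x (max (t - s) 0)) atTop (𝓝 1) := by
  apply (tendsto_peanoFlow x).comp
  apply tendsto_atTop_mono (fun t => le_max_left (t - s) 0)
  simpa [sub_eq_add_neg] using tendsto_atTop_add_const_right atTop (-s) (tendsto_id (α := ℝ))

lemma continuous_peanoFlow_fst (t : ℝ) : Continuous (fun x => peanoFlow x t) := by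
  unfold peanoFlow
  exact (continuous_const.add ((Real.continuous_sqrt.sub continuous_const).mul
    continuous_const)).pow 2

lemma continuous_peanoFlow_snd (x : ℝ) : Continuous (fun t => peanoFlow x t) := by
  unfold peanoFlow
  exact (continuous_const.add (continuous_const.mul
    ((continuous_neg.div_const 2).rexp))).pow 2

lemma w_integral {a : ℝ} (ha : 0 < a) :
    ∫ s in Set.Ioi (0:ℝ), a⁻¹ * Real.exp (-s / a) = 1 := by
  have key : ∫ s in Set.Ioi (0:ℝ), Real.exp (-s / a) = a := by
    have h : ∀ s : ℝ, Real.exp (-s / a) = Real.exp (-(a⁻¹ * s)) := by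
      intro s; congr 1; field_simp
    simp_rw [h]
    rw [integral_comp_mul_left_Ioi (fun u => Real.exp (-u)) 0 (inv_pos.2 ha)]
    simp [integral_exp_neg_Ioi, integral_exp_Iic_zero]
  rw [MeasureTheory.integral_const_mul, key, inv_mul_cancel₀ ha.ne']

lemma w_integrable {a : ℝ} (ha : 0 < a) :
    IntegrableOn (fun s => a⁻¹ * Real.exp (-s / a)) (Set.Ioi (0:ℝ)) := by
  have h : ∀ s : ℝ, a⁻¹ * Real.exp (-s / a) = a⁻¹ * Real.exp (-(a⁻¹) * s) := by
    intro s; congr 2; field_simp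
  simp_rw [h]
  exact (exp_neg_integrableOn_Ioi 0 (inv_pos.2 ha)).const_mul _

lemma w_nonneg {a : ℝ} (ha : 0 < a) (s : ℝ) : 0 ≤ a⁻¹ * Real.exp (-s / a) :=
  mul_nonneg (inv_pos.2 ha).le (Real.exp_pos _).le

lemma measurable_peanoTrans (a t : ℝ) (f : BoundedContinuousFunction ℝ ℝ) :
    Measurable (fun x => peanoTrans a t f x) := by
  unfold peanoTrans
  exact Measurable.ite (measurableSet_eq) measurable_const
    (f.continuous.comp (continuous_peanoFlow_fst t)).measurable

lemma norm_peanoTrans_le {a : ℝ} (ha : 0 ≤ a) (t : ℝ) (f : BoundedContinuousFunction ℝ ℝ)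
    (x : ℝ) : ‖peanoTrans a t f x‖ ≤ ‖f‖ := by
  unfold peanoTrans
  split_ifs with h1 h2
  · exact f.norm_coe_le_norm _
  · have ha' : 0 < a := lt_of_le_of_ne ha (Ne.symm h2)
    calc ‖∫ s in Set.Ioi (0:ℝ), a⁻¹ * Real.exp (-s / a) * f (peanoFlow 0 (max (t - s) 0))‖
        ≤ ∫ s in Set.Ioi (0:ℝ), a⁻¹ * Real.exp (-s / a) * ‖f‖ := by
          apply norm_integral_le_of_norm_le ((w_integrable ha').mul_const _)
          filter_upwards with s
          rw [norm_mul, Real.norm_of_nonneg (w_nonneg ha' s)]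
          exact mul_le_mul_of_nonneg_left (f.norm_coe_le_norm _) (w_nonneg ha' s)
      _ = ‖f‖ := by rw [MeasureTheory.integral_mul_const, w_integral ha', one_mul]
  · exact f.norm_coe_le_norm _

lemma tendsto_peanoTrans {a : ℝ} (ha : 0 ≤ a) (f : BoundedContinuousFunction ℝ ℝ) (x : ℝ) :
    Tendsto (fun t => peanoTrans a t f x) atTop (𝓝 (f 1)) := by
  unfold peanoTrans
  rcases eq_or_ne x 0 with hx | hx
  · subst hx
    simp only [if_pos rfl]
    rcases eq_or_ne a 0 with haa | haa
    · subst haa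
      simp only [if_pos rfl]
      exact (f.continuous.tendsto 1).comp (tendsto_peanoFlow 0)
    · simp only [if_neg haa]
      have ha' : 0 < a := lt_of_le_of_ne ha (Ne.symm haa)
      have lim : Tendsto (fun t => ∫ s in Set.Ioi (0:ℝ),
          a⁻¹ * Real.exp (-s / a) * f (peanoFlow 0 (max (t - s) 0))) atTop
          (𝓝 (∫ s in Set.Ioi (0:ℝ), a⁻¹ * Real.exp (-s / a) * f 1)) := by
        apply tendsto_integral_filter_of_dominated_convergence
          (fun s => a⁻¹ * Real.exp (-s / a) * ‖f‖)
        · filter_upwards with t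
          apply Continuous.aestronglyMeasurable
          apply Continuous.mul
          · exact continuous_const.mul ((continuous_id.neg.div_const a).rexp)
          · exact f.continuous.comp ((continuous_peanoFlow_snd 0).comp
              ((continuous_const.sub continuous_id).max continuous_const))
        · filter_upwards with t
          filter_upwards with s
          rw [norm_mul, Real.norm_of_nonneg (w_nonneg ha' s)]
          exact mul_le_mul_of_nonneg_left (f.norm_coe_le_norm _) (w_nonneg ha' s)
        · exact (w_integrable ha').mul_const _
        · filter_upwards with s
          exact tendsto_const_nhds.mul
            ((f.continuous.tendsto 1).comp (tendsto_peanoFlow_max 0 s))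
      have hval : ∫ s in Set.Ioi (0:ℝ), a⁻¹ * Real.exp (-s / a) * f 1 = f 1 := by
        rw [MeasureTheory.integral_mul_const, w_integral ha', one_mul]
      rwa [hval] at lim
  · simp only [if_neg hx]
    exact (f.continuous.tendsto 1).comp (tendsto_peanoFlow x)

lemma ext_bcf {μ ν : Measure ℝ} [IsFiniteMeasure μ] [IsFiniteMeasure ν]
    (h : ∀ f : BoundedContinuousFunction ℝ ℝ, ∫ x, f x ∂μ = ∫ x, f x ∂ν) : μ = ν := by
  apply ext_of_forall_lintegral_eq_of_IsFiniteMeasure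
  intro f
  have lip : LipschitzWith 1 ((↑) : NNReal → ℝ) := isometry_subtype_coe.lipschitz
  set f₀ : BoundedContinuousFunction ℝ ℝ := BoundedContinuousFunction.comp _ lip f with hf₀
  have hμ : Integrable (fun x => ((f x : NNReal) : ℝ)) μ := f₀.integrable μ
  have hν : Integrable (fun x => ((f x : NNReal) : ℝ)) ν := f₀.integrable ν
  rw [lintegral_coe_eq_integral f hμ, lintegral_coe_eq_integral f hν]
  exact congrArg ENNReal.ofReal (h f₀)

lemma isFiniteMeasure_ofReal_smul_dirac (r x : ℝ) :
    IsFiniteMeasure (ENNReal.ofReal r • Measure.dirac x) := by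
  constructor
  rw [Measure.smul_apply, smul_eq_mul]
  exact ENNReal.mul_lt_top ENNReal.ofReal_lt_top (by simp)

lemma measurable_peanoTransInf (t : ℝ) (f : BoundedContinuousFunction ℝ ℝ) :
    Measurable (fun x => peanoTransInf t f x) := by
  unfold peanoTransInf
  exact Measurable.ite (measurableSet_eq) measurable_const
    (f.continuous.comp (continuous_peanoFlow_fst t)).measurable

lemma integrable_peanoTransInf (t : ℝ) (f : BoundedContinuousFunction ℝ ℝ)
    (κ : Measure ℝ) [IsFiniteMeasure κ] :
    Integrable (fun x => peanoTransInf t f x) κ := by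
  apply Integrable.mono' (integrable_const ‖f‖)
    (measurable_peanoTransInf t f).aestronglyMeasurable
  filter_upwards with x
  unfold peanoTransInf
  split_ifs <;> exact f.norm_coe_le_norm _

/-- For `a ∈ [0,∞)` the Markov selection of the Peano example has `δ₁` as its unique
invariant measure, while for `a = ∞` (the absorbing selection) every convex combination of
`δ₀` and `δ₁` is invariant. -/
theorem stmt_13 :
    (∀ a : ℝ, 0 ≤ a → ∀ μ : Measure ℝ, IsProbabilityMeasure μ →
      μ (Set.Icc 0 1) = 1 →
      ((∀ t : ℝ, 0 ≤ t → ∀ f : BoundedContinuousFunction ℝ ℝ,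
          ∫ x, peanoTrans a t f x ∂μ = ∫ x, f x ∂μ) ↔ μ = Measure.dirac 1)) ∧
    (∀ c ∈ Set.Icc (0:ℝ) 1, ∀ t : ℝ, 0 ≤ t → ∀ f : BoundedContinuousFunction ℝ ℝ,
      ∫ x, peanoTransInf t f x
          ∂(ENNReal.ofReal c • Measure.dirac (0:ℝ) +
            ENNReal.ofReal (1 - c) • Measure.dirac (1:ℝ)) =
        ∫ x, f x
          ∂(ENNReal.ofReal c • Measure.dirac (0:ℝ) +
            ENNReal.ofReal (1 - c) • Measure.dirac (1:ℝ))) := by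
  constructor
  · intro a ha μ hμ _hsupp
    constructor
    · intro hinv
      have key : ∀ f : BoundedContinuousFunction ℝ ℝ, ∫ x, f x ∂μ = f 1 := by
        intro f
        have main : Tendsto (fun t => ∫ x, peanoTrans a t f x ∂μ) atTop
            (𝓝 (∫ _x, f 1 ∂μ)) := by
          apply tendsto_integral_filter_of_dominated_convergence (fun _ => ‖f‖)
          · filter_upwards with t
            exact (measurable_peanoTrans a t f).aestronglyMeasurable
          · filter_upwards with t
            filter_upwards with x
            exact norm_peanoTrans_le ha t f x
          · exact integrable_const _
          · filter_upwards with x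
            exact tendsto_peanoTrans ha f x
        have hconst : ∫ _x, f 1 ∂μ = f 1 := by simp
        rw [hconst] at main
        have ev : (fun t => ∫ x, peanoTrans a t f x ∂μ) =ᶠ[atTop]
            (fun _ => ∫ x, f x ∂μ) := by
          filter_upwards [eventually_ge_atTop (0:ℝ)] with t ht using hinv t ht f
        exact tendsto_nhds_unique tendsto_const_nhds ((tendsto_congr' ev).mp main)
      apply ext_bcf
      intro f
      rw [key f, integral_dirac]
    · intro h
      subst h
      intro t _ht f
      rw [integral_dirac, integral_dirac]
      simp [peanoTrans, peanoFlow_one]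
  · intro c _hc t _ht f
    haveI h0 := isFiniteMeasure_ofReal_smul_dirac c 0
    haveI h1 := isFiniteMeasure_ofReal_smul_dirac (1 - c) 1
    rw [integral_add_measure (integrable_peanoTransInf t f _) (integrable_peanoTransInf t f _),
      integral_add_measure (f.integrable _) (f.integrable _),
      integral_smul_measure, integral_smul_measure, integral_smul_measure,
      integral_smul_measure, integral_dirac, integral_dirac, integral_dirac, integral_dirac]
    have e0 : peanoTransInf t f 0 = f 0 := by simp [peanoTransInf]
    have e1 : peanoTransInf t f 1 = f 1 := by simp [peanoTransInf, peanoFlow_one]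
    rw [e0, e1]
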